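/- arXiv:2504.13278 — 2 statements merged into one kernel-verified Lean document; each statement's English description precedes it below -/
import Mathlib

section
/- With P symmetric positive semidefinite, R symmetric positive definite, S = H P Hᵀ + R and K = P Hᵀ S⁻¹, the updated covariance (I − K H) P is positive semidefinite. -/
open Matrix

/-- Kalman update: with `S = H * P * Hᵀ + R` and gain `K = P * Hᵀ * S⁻¹`, the updated
covariance `(I − K * H) * P` is positive semidefinite. -/
theorem kalman_update_posSemidef {n m : ℕ}
    (P : Matrix (Fin n) (Fin n) ℝ) (H : Matrix (Fin m) (Fin n) ℝ)
    (R S : Matrix (Fin m) (Fin m) ℝ) (K : Matrix (Fin n) (Fin m) ℝ)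
    (hPsymm : P.IsSymm) (hP : P.PosSemidef)
    (hRsymm : R.IsSymm) (hR : R.PosDef)
    (hS : S = H * P * Hᵀ + R) (hK : K = P * Hᵀ * S⁻¹) :
    ((1 - K * H) * P).PosSemidef := by
  have hSpd : S.PosDef := by
    rw [hS]
    have h1 : (H * P * Hᵀ).PosSemidef := by
      have := hP.mul_mul_conjTranspose_same H
      simpa [conjTranspose_eq_transpose_of_trivial, Matrix.map_id] using this
    exact Matrix.PosDef.posSemidef_add h1 hR
  have hSsymm : Sᵀ = S := by
    rw [hS, transpose_add, hRsymm.eq, transpose_mul, transpose_mul,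
      transpose_transpose, hPsymm.eq, Matrix.mul_assoc]
  have hSinvsymm : S⁻¹ᵀ = S⁻¹ := by rw [transpose_nonsing_inv, hSsymm]
  have hPt : Pᵀ = P := hPsymm.eq
  have joseph : (1 - K * H) * P =
      (1 - K * H) * P * (1 - K * H)ᵀ + K * R * Kᵀ := by
    have hKt : Kᵀ = S⁻¹ * H * P := by
      rw [hK, transpose_mul, transpose_mul, transpose_transpose, hPt,
        hSinvsymm, Matrix.mul_assoc]
    have hKS : K * S = P * Hᵀ := by
      rw [hK, Matrix.mul_assoc, Matrix.nonsing_inv_mul S (isUnit_iff_ne_zero.mpr hSpd.det_pos.ne'),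
        Matrix.mul_one]
    -- expand
    have expand : (1 - K * H) * P * (1 - K * H)ᵀ + K * R * Kᵀ =
        (1 - K * H) * P - (P * Hᵀ - K * S) * Kᵀ := by
      rw [hS, transpose_sub, transpose_one, transpose_mul]
      simp only [Matrix.sub_mul, Matrix.mul_sub, Matrix.add_mul, Matrix.mul_add,
        Matrix.one_mul, Matrix.mul_one, Matrix.mul_assoc]
      abel
    rw [expand, hKS, sub_self, Matrix.zero_mul, sub_zero]
  rw [joseph]
  have h2 : ((1 - K * H) * P * (1 - K * H)ᵀ).PosSemidef := by
    have := hP.mul_mul_conjTranspose_same (1 - K * H)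
    simpa [conjTranspose_eq_transpose_of_trivial] using this
  have h3 : (K * R * Kᵀ).PosSemidef := by
    have := hR.posSemidef.mul_mul_conjTranspose_same K
    simpa [conjTranspose_eq_transpose_of_trivial] using this
  exact h2.add h3
end

section
/- The optimal Kalman gain minimizes the trace of the posterior covariance: for any gain K', trace((I − K H) P (I − K H)ᵀ + K R Kᵀ) evaluated at K = P Hᵀ (H P Hᵀ + R)⁻¹ is less than or equal to its value at K = K'. -/
open Matrix

lemma trace_nonneg_of_posSemidef {k : ℕ} {M : Matrix (Fin k) (Fin k) ℝ}
    (h : M.PosSemidef) : 0 ≤ M.trace := by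
  rw [Matrix.trace]
  apply Finset.sum_nonneg
  intro i _
  exact h.diag_nonneg

/-- Optimality of the Kalman gain: the optimal gain `K* = P Hᵀ (H P Hᵀ + R)⁻¹` minimizes the
trace of the Joseph form posterior covariance `J(K) = (I − K H) P (I − K H)ᵀ + K R Kᵀ`. -/
theorem kalman_gain_minimizes_trace {n m : ℕ}
    (P : Matrix (Fin n) (Fin n) ℝ) (H : Matrix (Fin m) (Fin n) ℝ)
    (R : Matrix (Fin m) (Fin m) ℝ)
    (hPsymm : P.IsSymm) (hP : P.PosSemidef)
    (hRsymm : R.IsSymm) (hR : R.PosDef)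
    (Kstar : Matrix (Fin n) (Fin m) ℝ)
    (hKstar : Kstar = P * Hᵀ * (H * P * Hᵀ + R)⁻¹)
    (K' : Matrix (Fin n) (Fin m) ℝ) :
    ((1 - Kstar * H) * P * (1 - Kstar * H)ᵀ + Kstar * R * Kstarᵀ).trace ≤
      ((1 - K' * H) * P * (1 - K' * H)ᵀ + K' * R * K'ᵀ).trace := by
  set S : Matrix (Fin m) (Fin m) ℝ := H * P * Hᵀ + R with hS
  have hHPHt : (H * P * Hᵀ).PosSemidef := by
    simpa using hP.mul_mul_conjTranspose_same H
  have hSpd : S.PosDef := by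
    rw [hS, add_comm]; exact hR.add_posSemidef hHPHt
  have hSdet : IsUnit S.det := (Matrix.isUnit_iff_isUnit_det _).1 hSpd.isUnit
  have hKS : Kstar * S = P * Hᵀ := by
    rw [hKstar, Matrix.mul_assoc, Matrix.nonsing_inv_mul S hSdet, Matrix.mul_one]
  have hSsymm : Sᵀ = S := by
    rw [hS]
    simp [Matrix.transpose_add, Matrix.transpose_mul, hPsymm.eq, hRsymm.eq, Matrix.mul_assoc]
  have hSK : S * Kstarᵀ = H * P := by
    have := congrArg Matrix.transpose hKS
    simpa [Matrix.transpose_mul, hSsymm, hPsymm.eq, Matrix.mul_assoc] using this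
  have expand : ∀ K : Matrix (Fin n) (Fin m) ℝ,
      (1 - K * H) * P * (1 - K * H)ᵀ + K * R * Kᵀ
        = P - K * (H * P) - P * (Hᵀ * Kᵀ) + K * (S * Kᵀ) := by
    intro K
    rw [hS]
    simp only [Matrix.transpose_sub, Matrix.transpose_mul, Matrix.transpose_one, hPsymm.eq,
      Matrix.sub_mul, Matrix.mul_sub, Matrix.add_mul, Matrix.mul_add,
      Matrix.mul_one, Matrix.one_mul, Matrix.mul_assoc]
    abel
  have hkey : (1 - K' * H) * P * (1 - K' * H)ᵀ + K' * R * K'ᵀ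
      = ((1 - Kstar * H) * P * (1 - Kstar * H)ᵀ + Kstar * R * Kstarᵀ)
        + (K' - Kstar) * (S * (K' - Kstar)ᵀ) := by
    rw [expand, expand]
    have h2' : P * (Hᵀ * K'ᵀ) = Kstar * (S * K'ᵀ) := by
      rw [← Matrix.mul_assoc, ← Matrix.mul_assoc, hKS]
    have h2'' : P * (Hᵀ * Kstarᵀ) = Kstar * (S * Kstarᵀ) := by
      rw [← Matrix.mul_assoc, ← Matrix.mul_assoc, hKS]
    rw [hSK.symm, h2', h2'']
    simp only [Matrix.transpose_sub, Matrix.sub_mul, Matrix.mul_sub]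
    abel
  have htr : ((1 - K' * H) * P * (1 - K' * H)ᵀ + K' * R * K'ᵀ).trace
      = ((1 - Kstar * H) * P * (1 - Kstar * H)ᵀ + Kstar * R * Kstarᵀ).trace
        + ((K' - Kstar) * (S * (K' - Kstar)ᵀ)).trace := by
    rw [hkey]; exact Matrix.trace_add _ _
  have hpsd : ((K' - Kstar) * (S * (K' - Kstar)ᵀ)).PosSemidef := by
    have := hSpd.posSemidef.mul_mul_conjTranspose_same (K' - Kstar)
    simpa [Matrix.mul_assoc] using this
  linarith [trace_nonneg_of_posSemidef hpsd]
end
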